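/- Let λ ∈ X be dominant and μ ∈ X with μ ≤ λ. Then Arr_∞(μ, λ) = Σ_{j=1}^{n} max{k ∈ ℕ : μ − k·α_{j,n} ≤ λ} + Σ_{β} ℓ^β(μ), where the second sum runs over the positive roots β = α_{j,k} with k ≤ n − 1 (i.e., the positive roots of the sub-root system generated by α_1, …, α_{n−1}). -/

import Mathlib

open scoped BigOperators

namespace TypeATwisted

/-- `ℤ^{n+1}`. -/
abbrev V (n : ℕ) := Fin (n + 1) → ℤ

/-- The vector `(1,…,1)`. -/
def onesV (n : ℕ) : V n := fun _ => 1

/-- The subgroup `ℤ·(1,…,1)`. -/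
def lineZ (n : ℕ) : AddSubgroup (V n) := AddSubgroup.zmultiples (onesV n)

/-- The weight lattice `X = ℤ^{n+1}/ℤ·(1,…,1)` of `SL_{n+1}`. -/
abbrev X (n : ℕ) := V n ⧸ lineZ n

/-- The quotient map `ℤ^{n+1} → X`. -/
def toX (n : ℕ) : V n →+ X n := QuotientAddGroup.mk' (lineZ n)

/-- The positive root `e_a − e_b` (for `a < b`) as a vector in `ℤ^{n+1}`. -/
def posRootV (n : ℕ) (a b : Fin (n + 1)) : V n := Pi.single a 1 - Pi.single b 1

/-- The positive root `e_a − e_b` (for `a < b`) as an element of `X`. -/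
def posRootX (n : ℕ) (a b : Fin (n + 1)) : X n := toX n (posRootV n a b)

/-- The pairing `μ ↦ μ_a − μ_b` on `ℤ^{n+1}`. -/
def pairV (n : ℕ) (a b : Fin (n + 1)) : V n →+ ℤ :=
  (Pi.evalAddMonoidHom (fun _ => ℤ) a) - (Pi.evalAddMonoidHom (fun _ => ℤ) b)

lemma pairV_ker (n : ℕ) (a b : Fin (n + 1)) : ∀ v ∈ lineZ n, pairV n a b v = 0 := by
  intro v hv
  rw [lineZ, AddSubgroup.mem_zmultiples_iff] at hv
  obtain ⟨k, rfl⟩ := hv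
  simp [pairV, onesV]

/-- The pairing `⟨μ, β^∨⟩ = μ_a − μ_b` for the positive root `β = e_a − e_b`,
well defined on `X`. -/
def pairX (n : ℕ) (a b : Fin (n + 1)) : X n →+ ℤ :=
  QuotientAddGroup.lift (lineZ n) (pairV n a b) (pairV_ker n a b)

/-- The root lattice `ℤΦ ⊆ X`. -/
def rootLattice (n : ℕ) : AddSubgroup (X n) :=
  AddSubgroup.closure {x | ∃ a b : Fin (n + 1), a < b ∧ x = posRootX n a b}

/-- `μ ∈ X` is dominant if it has a weakly decreasing representative. -/
def IsDominant (n : ℕ) (μ : X n) : Prop := ∃ v : V n, Antitone v ∧ toX n v = μ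

/-- `μ ≤ λ` iff `λ − μ ∈ ℤΦ` and `μ` lies in the convex hull of the `S_{n+1}`-orbit
of `λ` inside `ℝ^{n+1}/ℝ·(1,…,1)`. -/
def wle (n : ℕ) (μ lam : X n) : Prop :=
  lam - μ ∈ rootLattice n ∧
  ∃ u v : V n, toX n u = μ ∧ toX n v = lam ∧ ∃ c : ℝ,
    (fun i => (u i : ℝ) + c) ∈
      convexHull ℝ {w : Fin (n + 1) → ℝ |
        ∃ σ : Equiv.Perm (Fin (n + 1)), w = fun i => (v (σ i) : ℝ)}

/-- The untwisted Bruhat edge between `μ − kβ` and `μ` points toward `μ`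
(`β = e_a − e_b`, `a < b`, `k ≠ 0`): `⟨μ,β^∨⟩ ≥ k > 0` or `⟨μ,β^∨⟩ < k < 0`. -/
def edgeToward (n : ℕ) (a b : Fin (n + 1)) (k : ℤ) (μ : X n) : Prop :=
  (0 < k ∧ k ≤ pairX n a b μ) ∨ (k < 0 ∧ pairX n a b μ < k)

/-- The edge between `μ − kβ` and `μ` is `m`-twisted: `β = α_{j,n}` (i.e. `b` is the
last index), and with `c := k − ⟨μ,β^∨⟩` one has `c ≥ 1` and `(c−1)·n + j ≤ m`,
where `j = a + 1` (`1`-based). -/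
def IsTwisted (n : ℕ) (m : ℕ∞) (a b : Fin (n + 1)) (k : ℤ) (μ : X n) : Prop :=
  b = Fin.last n ∧ 1 ≤ k - pairX n a b μ ∧
  (((k - pairX n a b μ - 1).toNat * n + (a : ℕ) + 1 : ℕ) : ℕ∞) ≤ m

/-- In the `m`-twisted Bruhat graph `Γ^m`, the edge between `μ − kβ` and `μ` is directed
toward `μ` iff exactly one of `(μ−kβ) ◁ μ` and `m`-twistedness holds.  (`m = 0` gives
the untwisted Bruhat graph.) -/
def dirToward (n : ℕ) (m : ℕ∞) (a b : Fin (n + 1)) (k : ℤ) (μ : X n) : Prop :=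
  Xor' (edgeToward n a b k μ) (IsTwisted n m a b k μ)

/-- The edge between `ν` and `μ` is directed toward `μ` in `Γ^m`. -/
def EdgeDirToward (n : ℕ) (m : ℕ∞) (ν μ : X n) : Prop :=
  ∃ a b : Fin (n + 1), a < b ∧ ∃ k : ℤ, k ≠ 0 ∧
    ν = μ - k • posRootX n a b ∧ dirToward n m a b k μ

/-- `Arr_m(μ,λ)`: the number of pairs `(β,k) ∈ Φ⁺ × (ℤ∖{0})` with `μ − kβ ≤ λ` and the
edge between `μ − kβ` and `μ` directed toward `μ` in `Γ^m`. -/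
noncomputable def ArrRes (n : ℕ) (m : ℕ∞) (μ lam : X n) : ℕ :=
  {p : (Fin (n + 1) × Fin (n + 1)) × ℤ | p.1.1 < p.1.2 ∧ p.2 ≠ 0 ∧
    wle n (μ - p.2 • posRootX n p.1.1 p.1.2) lam ∧
    dirToward n m p.1.1 p.1.2 p.2 μ}.ncard

/-- `Arr_m(μ)`: the number of pairs `(β,k) ∈ Φ⁺ × (ℤ∖{0})` with the edge between
`μ − kβ` and `μ` directed toward `μ` in `Γ^m`. -/
noncomputable def Arr (n : ℕ) (m : ℕ∞) (μ : X n) : ℕ :=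
  {p : (Fin (n + 1) × Fin (n + 1)) × ℤ | p.1.1 < p.1.2 ∧ p.2 ≠ 0 ∧
    dirToward n m p.1.1 p.1.2 p.2 μ}.ncard

/-- The affine reflection `r_{β,c}(ν) = ν − (c + ⟨ν,β^∨⟩)·β` for `β = e_a − e_b`. -/
def areflect (n : ℕ) (a b : Fin (n + 1)) (c : ℤ) : X n → X n :=
  fun ν => ν - (c + pairX n a b ν) • posRootX n a b

/-- `ℓ^β(μ)`: `⟨μ,β^∨⟩` if `⟨μ,β^∨⟩ ≥ 0`, and `−⟨μ,β^∨⟩ − 1` otherwise. -/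
def ellBeta (n : ℕ) (a b : Fin (n + 1)) (μ : X n) : ℕ :=
  if 0 ≤ pairX n a b μ then (pairX n a b μ).toNat else (-(pairX n a b μ) - 1).toNat

end TypeATwisted

namespace TypeATwisted

variable {n : ℕ}

lemma pairV_apply (a b : Fin (n+1)) (v : V n) : pairV n a b v = v a - v b := rfl

lemma pairX_toX (a b : Fin (n+1)) (v : V n) : pairX n a b (toX n v) = v a - v b := rfl

lemma toX_eq_iff (u u' : V n) : toX n u = toX n u' ↔ ∃ d : ℤ, u' = u + d • onesV n := by
  constructor
  · intro h
    rw [toX, QuotientAddGroup.mk'_eq_mk'] at h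
    obtain ⟨z, hz, h⟩ := h
    rw [lineZ, AddSubgroup.mem_zmultiples_iff] at hz
    obtain ⟨d, rfl⟩ := hz
    exact ⟨d, h.symm⟩
  · rintro ⟨d, rfl⟩
    rw [toX, QuotientAddGroup.mk'_eq_mk']
    exact ⟨d • onesV n, AddSubgroup.zsmul_mem _ (AddSubgroup.mem_zmultiples _) d, rfl⟩

lemma pairX_posRootX (a b : Fin (n+1)) (hab : a ≠ b) : pairX n a b (posRootX n a b) = 2 := by
  rw [posRootX, pairX_toX, posRootV]
  simp [Pi.single_eq_same, Pi.single_eq_of_ne hab, Pi.single_eq_of_ne hab.symm]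

lemma posRootX_mem (a b : Fin (n+1)) (hab : a < b) : posRootX n a b ∈ rootLattice n :=
  AddSubgroup.subset_closure ⟨a, b, hab, rfl⟩

end TypeATwisted

namespace TypeATwisted

variable {n : ℕ}

/-- Orbit of `v` under coordinate permutations, inside `ℝ^{n+1}`. -/
def orb (v : V n) : Set (Fin (n + 1) → ℝ) :=
  {w : Fin (n + 1) → ℝ | ∃ σ : Equiv.Perm (Fin (n + 1)), w = fun i => (v (σ i) : ℝ)}

open Pointwise

lemma orb_add_ones (v : V n) (d : ℤ) :
    orb (v + d • onesV n) = (fun _ : Fin (n+1) => (d : ℝ)) +ᵥ orb v := by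
  ext w
  constructor
  · rintro ⟨σ, rfl⟩
    refine ⟨fun i => (v (σ i) : ℝ), ⟨σ, rfl⟩, ?_⟩
    funext i
    show (d : ℝ) + (v (σ i) : ℝ) = (((v + d • onesV n) (σ i) : ℤ) : ℝ)
    simp [onesV]
    push_cast
    ring
  · rintro ⟨y, ⟨σ, rfl⟩, rfl⟩
    refine ⟨σ, ?_⟩
    funext i
    show (d : ℝ) + (v (σ i) : ℝ) = (((v + d • onesV n) (σ i) : ℤ) : ℝ)
    simp [onesV]
    push_cast
    ring

lemma mem_hull_orb_shift (v : V n) (d : ℤ) (x : Fin (n+1) → ℝ) :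
    x ∈ convexHull ℝ (orb v) ↔
      (fun i => x i + (d : ℝ)) ∈ convexHull ℝ (orb (v + d • onesV n)) := by
  rw [orb_add_ones, convexHull_vadd]
  constructor
  · intro h
    refine ⟨x, h, ?_⟩
    funext i
    show (d : ℝ) + x i = x i + d
    ring
  · rintro ⟨y, hy, he⟩
    have : y = x := by
      funext i
      have := congrFun he i
      show _ = _
      have h2 : (d : ℝ) + y i = x i + d := this
      linarith
    rwa [this] at hy

lemma mem_hull_orb_perm (v : V n) (τ : Equiv.Perm (Fin (n+1))) (x : Fin (n+1) → ℝ)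
    (hx : x ∈ convexHull ℝ (orb v)) : (fun i => x (τ i)) ∈ convexHull ℝ (orb v) := by
  set f : (Fin (n+1) → ℝ) →ₗ[ℝ] (Fin (n+1) → ℝ) := LinearMap.funLeft ℝ ℝ τ with hf
  have himg : f '' orb v = orb v := by
    ext w
    constructor
    · rintro ⟨y, ⟨σ, rfl⟩, rfl⟩
      exact ⟨τ.trans σ, rfl⟩
    · rintro ⟨σ, rfl⟩
      refine ⟨fun i => (v (σ (τ.symm i)) : ℝ), ⟨τ.symm.trans σ, rfl⟩, ?_⟩
      funext i
      simp [hf, LinearMap.funLeft_apply, Function.comp]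
  have himg2 := f.image_convexHull (orb v)
  rw [himg] at himg2
  rw [← himg2]
  exact ⟨x, hx, rfl⟩

lemma wle_iff_rep (v0 : V n) (lam : X n) (hv0 : toX n v0 = lam) (κ : X n) :
    wle n κ lam ↔ (lam - κ ∈ rootLattice n ∧ ∃ u : V n, toX n u = κ ∧ ∃ c : ℝ,
      (fun i => (u i : ℝ) + c) ∈ convexHull ℝ (orb v0)) := by
  constructor
  · rintro ⟨h1, u, v, hu, hv, c, hc⟩
    obtain ⟨d, rfl⟩ := (toX_eq_iff v0 v).1 (by rw [hv0, hv])
    refine ⟨h1, u, hu, c - d, ?_⟩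
    refine (mem_hull_orb_shift v0 d _).2 ?_
    convert hc using 1
    · rfl
    funext i
    ring
  · rintro ⟨h1, u, hu, c, hc⟩
    exact ⟨h1, u, v0, hu, hv0, c, hc⟩

end TypeATwisted

namespace TypeATwisted

variable {n : ℕ}

lemma toX_posRootV (a b : Fin (n+1)) : toX n (posRootV n a b) = posRootX n a b := rfl

lemma sub_lattice_step (lam μ : X n) (a b : Fin (n+1)) (hab : a < b) (k : ℤ)
    (h : lam - μ ∈ rootLattice n) : lam - (μ - k • posRootX n a b) ∈ rootLattice n := by
  have : lam - (μ - k • posRootX n a b) = (lam - μ) + k • posRootX n a b := by abel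
  rw [this]
  exact AddSubgroup.add_mem _ h (AddSubgroup.zsmul_mem _ (posRootX_mem a b hab) k)

lemma wle_between (lam μ : X n) (a b : Fin (n+1)) (hab : a < b) (K k : ℤ)
    (h0 : 0 ≤ k) (hk : k ≤ K) (h1 : wle n μ lam) (h2 : wle n (μ - K • posRootX n a b) lam) :
    wle n (μ - k • posRootX n a b) lam := by
  obtain ⟨v0, hv0⟩ := QuotientAddGroup.mk'_surjective (lineZ n) lam
  have hv0' : toX n v0 = lam := hv0
  rw [wle_iff_rep v0 lam hv0'] at h1 h2 ⊢
  obtain ⟨hL1, u, hu, c, hc⟩ := h1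
  obtain ⟨hL2, u2, hu2, c2, hc2⟩ := h2
  refine ⟨sub_lattice_step lam μ a b hab k hL1, ?_⟩
  by_cases hK : K = 0
  · have hk0 : k = 0 := by omega
    subst hK hk0
    refine ⟨u, ?_, c, hc⟩
    rw [hu]; simp
  · have hKpos : 0 < K := by omega
    have htx : toX n (u - K • posRootV n a b) = μ - K • posRootX n a b := by
      rw [map_sub, map_zsmul, hu, toX_posRootV]
    obtain ⟨d, hd⟩ := (toX_eq_iff (u - K • posRootV n a b) u2).1 (by rw [htx, hu2])
    set t : ℝ := (k : ℝ) / (K : ℝ) with ht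
    have hKne : (K : ℝ) ≠ 0 := by exact_mod_cast hK
    have ht0 : 0 ≤ t := div_nonneg (by exact_mod_cast h0) (by positivity)
    have ht1 : t ≤ 1 := by
      rw [ht, div_le_one (by exact_mod_cast hKpos)]
      exact_mod_cast hk
    have htK : t * (K : ℝ) = (k : ℝ) := div_mul_cancel₀ _ hKne
    refine ⟨u - k • posRootV n a b, ?_, (1-t)*c + t*((d:ℝ) + c2), ?_⟩
    · rw [map_sub, map_zsmul, hu, toX_posRootV]
    · have hmem := (convex_convexHull ℝ (orb v0)) hc hc2
        (by linarith : (0:ℝ) ≤ 1 - t) ht0 (by ring)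
      convert hmem using 1
      funext i
      subst hd
      show ((u - k • posRootV n a b) i : ℝ) + ((1-t)*c + t*((d:ℝ) + c2)) = _
      simp only [Pi.add_apply, Pi.sub_apply, Pi.smul_apply, smul_eq_mul, Pi.smul_apply,
        onesV, smul_eq_mul, mul_one]
      push_cast
      show _ = (1-t) * ((u i : ℝ) + c) + t * ((u i : ℝ) - K * posRootV n a b i + (d:ℝ) + c2)
      linear_combination ((posRootV n a b i : ℝ)) * htK

lemma wle_reflect (lam μ : X n) (a b : Fin (n+1)) (hab : a < b) (h1 : wle n μ lam) :
    wle n (μ - (pairX n a b μ) • posRootX n a b) lam := by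
  obtain ⟨v0, hv0⟩ := QuotientAddGroup.mk'_surjective (lineZ n) lam
  have hv0' : toX n v0 = lam := hv0
  rw [wle_iff_rep v0 lam hv0'] at h1 ⊢
  obtain ⟨hL1, u, hu, c, hc⟩ := h1
  refine ⟨sub_lattice_step lam μ a b hab _ hL1, ?_⟩
  have hp : pairX n a b μ = u a - u b := by rw [← hu, pairX_toX]
  refine ⟨u - (pairX n a b μ) • posRootV n a b, ?_, c, ?_⟩
  · rw [map_sub, map_zsmul, hu, toX_posRootV]
  · have hperm := mem_hull_orb_perm v0 (Equiv.swap a b) _ hc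
    convert hperm using 1
    funext i
    show ((u - (pairX n a b μ) • posRootV n a b) i : ℝ) + c = (u (Equiv.swap a b i) : ℝ) + c
    have : (u - (pairX n a b μ) • posRootV n a b) i = u (Equiv.swap a b i) := by
      rcases eq_or_ne i a with rfl | hia
      · rw [Equiv.swap_apply_left]
        have h1 : Pi.single (M := fun _ : Fin (n+1) => ℤ) i 1 i = 1 := by simp
        have h2 : Pi.single (M := fun _ : Fin (n+1) => ℤ) b 1 i = 0 := by rw [Pi.single_eq_of_ne hab.ne]
        simp only [Pi.sub_apply, Pi.smul_apply, smul_eq_mul, posRootV, hp, h1, h2]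
        ring
      · rcases eq_or_ne i b with rfl | hib
        · rw [Equiv.swap_apply_right]
          have h1 : Pi.single (M := fun _ : Fin (n+1) => ℤ) a 1 i = 0 := by rw [Pi.single_eq_of_ne hab.ne']
          have h2 : Pi.single (M := fun _ : Fin (n+1) => ℤ) i 1 i = 1 := by simp
          simp only [Pi.sub_apply, Pi.smul_apply, smul_eq_mul, posRootV, hp, h1, h2]
          ring
        · rw [Equiv.swap_apply_of_ne_of_ne hia hib]
          have h1 : Pi.single (M := fun _ : Fin (n+1) => ℤ) a 1 i = 0 := by rw [Pi.single_eq_of_ne hia]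
          have h2 : Pi.single (M := fun _ : Fin (n+1) => ℤ) b 1 i = 0 := by rw [Pi.single_eq_of_ne hib]
          simp only [Pi.sub_apply, Pi.smul_apply, smul_eq_mul, posRootV, h1, h2]
          ring
    rw [this]

lemma wle_of_edge (lam μ : X n) (a b : Fin (n+1)) (hab : a < b) (k : ℤ)
    (h1 : wle n μ lam) (he : edgeToward n a b k μ) :
    wle n (μ - k • posRootX n a b) lam := by
  rcases he with ⟨hk0, hkq⟩ | ⟨hk0, hqk⟩
  · exact wle_between lam μ a b hab _ k (by omega) hkq h1 (wle_reflect lam μ a b hab h1)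
  · have h2 := wle_reflect lam μ a b hab h1
    have hend : wle n ((μ - (pairX n a b μ) • posRootX n a b) -
        (-(pairX n a b μ)) • posRootX n a b) lam := by
      have e2 : (μ - (pairX n a b μ) • posRootX n a b) -
          (-(pairX n a b μ)) • posRootX n a b = μ := by
        rw [neg_smul]; abel
      rw [e2]; exact h1
    have h3 := wle_between lam (μ - (pairX n a b μ) • posRootX n a b) a b hab
      (-(pairX n a b μ)) (k - pairX n a b μ) (by omega) (by omega) h2 hend
    have e : (μ - (pairX n a b μ) • posRootX n a b) -
        (k - pairX n a b μ) • posRootX n a b = μ - k • posRootX n a b := by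
      rw [sub_smul]; abel
    rw [e] at h3
    exact h3

lemma pairX_lb (lam : X n) (v0 : V n) (hv0 : toX n v0 = lam) (a b : Fin (n+1)) (κ : X n)
    (h : wle n κ lam) : -(2 * ∑ i, |v0 i|) ≤ pairX n a b κ := by
  rw [wle_iff_rep v0 lam hv0] at h
  obtain ⟨-, u, hu, c, hc⟩ := h
  set C : ℤ := 2 * ∑ i, |v0 i| with hC
  have hlin : IsLinearMap ℝ (fun w : Fin (n+1) → ℝ => w a - w b) :=
    ⟨fun x y => by simp; ring, fun r x => by simp [smul_eq_mul]; ring⟩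
  have hsub : orb v0 ⊆ {w : Fin (n+1) → ℝ | ((-C : ℤ) : ℝ) ≤ w a - w b} := by
    rintro w ⟨σ, rfl⟩
    show ((-C : ℤ) : ℝ) ≤ (v0 (σ a) : ℝ) - (v0 (σ b) : ℝ)
    have hA : |v0 (σ a)| ≤ ∑ i, |v0 i| :=
      Finset.single_le_sum (f := fun i => |v0 i|) (fun i _ => abs_nonneg _) (Finset.mem_univ (σ a))
    have hB : |v0 (σ b)| ≤ ∑ i, |v0 i| :=
      Finset.single_le_sum (f := fun i => |v0 i|) (fun i _ => abs_nonneg _) (Finset.mem_univ (σ b))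
    have := abs_le.1 hA
    have := abs_le.1 hB
    have : -C ≤ v0 (σ a) - v0 (σ b) := by omega
    exact_mod_cast this
  have hhull := convexHull_min hsub (convex_halfSpace_ge hlin ((-C : ℤ) : ℝ))
  have hpt := hhull hc
  have h2 : ((-C : ℤ) : ℝ) ≤ ((u a : ℤ) : ℝ) - ((u b : ℤ) : ℝ) := by
    have : ((-C : ℤ) : ℝ) ≤ ((u a : ℝ) + c) - ((u b : ℝ) + c) := hpt
    linarith
  have h3 : -C ≤ u a - u b := by exact_mod_cast h2
  have h4 : pairX n a b κ = u a - u b := by rw [← hu, pairX_toX]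
  omega

lemma dir_top_last (a : Fin (n+1)) (k : ℤ) (hk : k ≠ 0) (μ : X n) :
    dirToward n ⊤ a (Fin.last n) k μ ↔ 1 ≤ k := by
  unfold dirToward IsTwisted edgeToward Xor'
  simp only [le_top, and_true, true_and]
  unfold Xor
  omega

lemma dir_top_nonlast (a b : Fin (n+1)) (hb : b ≠ Fin.last n) (k : ℤ) (μ : X n) :
    dirToward n ⊤ a b k μ ↔ edgeToward n a b k μ := by
  unfold dirToward IsTwisted Xor'
  constructor
  · rintro (⟨h, -⟩ | ⟨⟨hb', -⟩, -⟩)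
    · exact h
    · exact absurd hb' hb
  · intro h
    exact Or.inl ⟨h, fun ht => hb ht.1⟩

end TypeATwisted

open TypeATwisted

/-- for `λ` dominant and `μ ≤ λ`,
`Arr_∞(μ,λ) = Σ_{j=1}^{n} max{k ∈ ℕ : μ − k·α_{j,n} ≤ λ} + Σ_β ℓ^β(μ)`,
where the second sum runs over the positive roots of the sub-root system generated by
`α_1, …, α_{n−1}` (i.e. the roots `e_a − e_b` with `a < b` both distinct from the last
index). -/
theorem statement11 (n : ℕ) (hn : 2 ≤ n) (lam μ : X n)
    (hlam : IsDominant n lam) (hμle : wle n μ lam) :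
    ArrRes n ⊤ μ lam =
      (∑ j : Fin n,
        sSup {k : ℕ | wle n (μ - (k : ℤ) • posRootX n (Fin.castSucc j) (Fin.last n)) lam}) +
      ∑ p ∈ Finset.univ.filter (fun p : Fin n × Fin n => p.1 < p.2),
        ellBeta n (Fin.castSucc p.1) (Fin.castSucc p.2) μ := by
  classical
  obtain ⟨v0, hv0⟩ := QuotientAddGroup.mk'_surjective (TypeATwisted.lineZ n) lam
  have hv0' : toX n v0 = lam := hv0
  set T : Fin n → Set ℕ := fun j =>
    {k : ℕ | wle n (μ - (k : ℤ) • posRootX n (Fin.castSucc j) (Fin.last n)) lam} with hTdef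
  have hT0 : ∀ j, 0 ∈ T j := by
    intro j
    show wle n (μ - ((0:ℕ) : ℤ) • posRootX n (Fin.castSucc j) (Fin.last n)) lam
    simpa using hμle
  have hbdd : ∀ j, BddAbove (T j) := by
    intro j
    refine ⟨(pairX n (Fin.castSucc j) (Fin.last n) μ + 2 * ∑ i, |v0 i|).toNat, ?_⟩
    intro k hk
    have hk' : wle n (μ - (k : ℤ) • posRootX n (Fin.castSucc j) (Fin.last n)) lam := hk
    have hlb := pairX_lb lam v0 hv0' (Fin.castSucc j) (Fin.last n) _ hk'
    have hpr : pairX n (Fin.castSucc j) (Fin.last n)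
        (μ - (k : ℤ) • posRootX n (Fin.castSucc j) (Fin.last n)) =
        pairX n (Fin.castSucc j) (Fin.last n) μ - 2 * k := by
      rw [map_sub, map_zsmul, pairX_posRootX _ _ (ne_of_lt (Fin.castSucc_lt_last j)), smul_eq_mul]
      ring
    rw [hpr] at hlb
    omega
  set M : Fin n → ℕ := fun j => sSup (T j) with hMdef
  have hMmem : ∀ j, M j ∈ T j := fun j => Nat.sSup_mem ⟨0, hT0 j⟩ (hbdd j)
  have hTle : ∀ j k, k ∈ T j ↔ k ≤ M j := by
    intro j k
    constructor
    · exact fun h => le_csSup (hbdd j) h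
    · intro h
      show wle n (μ - (k : ℤ) • posRootX n (Fin.castSucc j) (Fin.last n)) lam
      exact wle_between lam μ (Fin.castSucc j) (Fin.last n) (Fin.castSucc_lt_last j)
        (M j : ℤ) (k : ℤ) (by positivity) (by exact_mod_cast h) hμle (hMmem j)
  have hlastk : ∀ (j : Fin n) (k : ℤ),
      (k ≠ 0 ∧ wle n (μ - k • posRootX n (Fin.castSucc j) (Fin.last n)) lam ∧
        dirToward n ⊤ (Fin.castSucc j) (Fin.last n) k μ) ↔ (1 ≤ k ∧ k ≤ (M j : ℤ)) := by
    intro j k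
    constructor
    · rintro ⟨hk0, hw, hd⟩
      have h1 : 1 ≤ k := (dir_top_last _ k hk0 μ).1 hd
      have hmem : k.toNat ∈ T j := by
        show wle n (μ - ((k.toNat : ℕ) : ℤ) • posRootX n (Fin.castSucc j) (Fin.last n)) lam
        rwa [Int.toNat_of_nonneg (by omega : (0:ℤ) ≤ k)]
      have := (hTle j k.toNat).1 hmem
      exact ⟨h1, by omega⟩
    · rintro ⟨h1, h2⟩
      refine ⟨by omega, ?_, (dir_top_last _ k (by omega) μ).2 h1⟩
      have hmem : k.toNat ∈ T j := (hTle j k.toNat).2 (by omega)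
      have hw : wle n (μ - ((k.toNat : ℕ) : ℤ) • posRootX n (Fin.castSucc j) (Fin.last n)) lam :=
        hmem
      rwa [Int.toNat_of_nonneg (by omega : (0:ℤ) ≤ k)] at hw
  set E : (Fin n × Fin n) → Finset ℤ := fun p =>
    if 0 ≤ pairX n (Fin.castSucc p.1) (Fin.castSucc p.2) μ then
      Finset.Icc 1 (pairX n (Fin.castSucc p.1) (Fin.castSucc p.2) μ)
    else Finset.Ioo (pairX n (Fin.castSucc p.1) (Fin.castSucc p.2) μ) 0 with hEdef
  have hE : ∀ (p : Fin n × Fin n) (k : ℤ),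
      k ∈ E p ↔ edgeToward n (Fin.castSucc p.1) (Fin.castSucc p.2) k μ := by
    intro p k
    unfold edgeToward
    by_cases hq : 0 ≤ pairX n (Fin.castSucc p.1) (Fin.castSucc p.2) μ
    · rw [hEdef]
      simp only [hq, if_true, Finset.mem_Icc]
      omega
    · rw [hEdef]
      simp only [hq, if_false, Finset.mem_Ioo]
      omega
  have hEcard : ∀ p : Fin n × Fin n,
      (E p).card = ellBeta n (Fin.castSucc p.1) (Fin.castSucc p.2) μ := by
    intro p
    by_cases hq : 0 ≤ pairX n (Fin.castSucc p.1) (Fin.castSucc p.2) μ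
    · rw [hEdef]
      simp only [hq, if_true, ellBeta, if_pos]
      rw [Int.card_Icc]
      omega
    · rw [hEdef]
      simp only [hq, if_false, ellBeta]
      rw [Int.card_Ioo]
      omega
  set F1 : Finset ((Fin (n+1) × Fin (n+1)) × ℤ) :=
    Finset.univ.biUnion (fun j : Fin n =>
      (Finset.Icc (1:ℤ) (M j : ℤ)).image fun k => (((Fin.castSucc j), Fin.last n), k)) with hF1
  set F2 : Finset ((Fin (n+1) × Fin (n+1)) × ℤ) :=
    (Finset.univ.filter fun p : Fin n × Fin n => p.1 < p.2).biUnion (fun p =>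
      (E p).image fun k => (((Fin.castSucc p.1), (Fin.castSucc p.2)), k)) with hF2
  have hSF : {p : (Fin (n + 1) × Fin (n + 1)) × ℤ | p.1.1 < p.1.2 ∧ p.2 ≠ 0 ∧
      wle n (μ - p.2 • posRootX n p.1.1 p.1.2) lam ∧ dirToward n ⊤ p.1.1 p.1.2 p.2 μ} =
      ↑(F1 ∪ F2) := by
    ext x
    rw [Finset.mem_coe, Finset.mem_union, hF1, hF2, Finset.mem_biUnion, Finset.mem_biUnion]
    simp only [Set.mem_setOf_eq, Finset.mem_univ, true_and, Finset.mem_image, Finset.mem_filter,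
      Finset.mem_Icc]
    constructor
    · rintro ⟨hab, hk0, hw, hd⟩
      by_cases hb : x.1.2 = Fin.last n
      · have ha : x.1.1 ≠ Fin.last n := ne_of_lt (hb ▸ hab)
        obtain ⟨j, hj⟩ := Fin.exists_castSucc_eq.mpr ha
        left
        refine ⟨j, x.2, ?_, ?_⟩
        · rw [← hj, hb] at hw hd
          exact (hlastk j x.2).1 ⟨hk0, hw, hd⟩
        · rw [hj, ← hb]
      · obtain ⟨j2, hj2⟩ := Fin.exists_castSucc_eq.mpr hb
        have ha : x.1.1 ≠ Fin.last n := by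
          intro h
          rw [h] at hab
          exact absurd hab (not_lt.mpr (Fin.le_last _))
        obtain ⟨j1, hj1⟩ := Fin.exists_castSucc_eq.mpr ha
        right
        refine ⟨(j1, j2), ?_, x.2, ?_, ?_⟩
        · show j1 < j2
          rw [← Fin.castSucc_lt_castSucc_iff, hj1, hj2]
          exact hab
        · rw [← hj1, ← hj2] at hd
          exact (hE (j1, j2) x.2).2
            ((dir_top_nonlast _ _ (ne_of_lt (Fin.castSucc_lt_last j2)) x.2 μ).1 hd)
        · rw [hj1, hj2]
    · rintro (⟨j, k', hk', rfl⟩ | ⟨p, hp, k', hk', rfl⟩)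
      · obtain ⟨hk0, hw, hd⟩ := (hlastk j k').2 hk'
        exact ⟨Fin.castSucc_lt_last j, hk0, hw, hd⟩
      · have he := (hE p k').1 hk'
        have hk0 : k' ≠ 0 := by
          rcases he with ⟨h, -⟩ | ⟨h, -⟩ <;> omega
        have hblt : Fin.castSucc p.2 ≠ Fin.last n := ne_of_lt (Fin.castSucc_lt_last p.2)
        refine ⟨?_, hk0, ?_, ?_⟩
        · show Fin.castSucc p.1 < Fin.castSucc p.2
          exact Fin.castSucc_lt_castSucc_iff.2 hp
        · exact wle_of_edge lam μ _ _ (Fin.castSucc_lt_castSucc_iff.2 hp) k' hμle he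
        · exact (dir_top_nonlast _ _ hblt k' μ).2 he
  unfold ArrRes
  rw [hSF, Set.ncard_coe_finset]
  have hdisj : Disjoint F1 F2 := by
    rw [Finset.disjoint_left]
    intro x hx1 hx2
    rw [hF1, Finset.mem_biUnion] at hx1
    rw [hF2, Finset.mem_biUnion] at hx2
    obtain ⟨j, -, hx1⟩ := hx1
    obtain ⟨p, -, hx2⟩ := hx2
    rw [Finset.mem_image] at hx1 hx2
    obtain ⟨k1, -, rfl⟩ := hx1
    obtain ⟨k2, -, h⟩ := hx2
    have h2 : Fin.castSucc p.2 = Fin.last n := by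
      have := congrArg (fun y => y.1.2) h
      simpa using this
    exact absurd h2 (ne_of_lt (Fin.castSucc_lt_last p.2))
  rw [Finset.card_union_of_disjoint hdisj]
  have hinj : ∀ ab : (Fin (n+1) × Fin (n+1)),
      Function.Injective (fun k : ℤ => (ab, k)) := by
    intro ab k1 k2 h
    simpa using congrArg Prod.snd h
  have hd1 : ∀ j1 ∈ (Finset.univ : Finset (Fin n)), ∀ j2 ∈ Finset.univ, j1 ≠ j2 →
      Disjoint ((Finset.Icc (1:ℤ) (M j1 : ℤ)).image fun k => (((Fin.castSucc j1), Fin.last n), k))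
        ((Finset.Icc (1:ℤ) (M j2 : ℤ)).image fun k => (((Fin.castSucc j2), Fin.last n), k)) := by
    rintro j1 - j2 - hne
    rw [Finset.disjoint_left]
    intro x hx1 hx2
    rw [Finset.mem_image] at hx1 hx2
    obtain ⟨k1, -, rfl⟩ := hx1
    obtain ⟨k2, -, h⟩ := hx2
    apply hne
    have := congrArg (fun y => y.1.1) h
    simp only at this
    exact (Fin.castSucc_injective n this).symm
  have hd2 : ∀ p1 ∈ (Finset.univ.filter fun p : Fin n × Fin n => p.1 < p.2),
      ∀ p2 ∈ (Finset.univ.filter fun p : Fin n × Fin n => p.1 < p.2), p1 ≠ p2 →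
      Disjoint ((E p1).image fun k => (((Fin.castSucc p1.1), (Fin.castSucc p1.2)), k))
        ((E p2).image fun k => (((Fin.castSucc p2.1), (Fin.castSucc p2.2)), k)) := by
    rintro p1 - p2 - hne
    rw [Finset.disjoint_left]
    intro x hx1 hx2
    rw [Finset.mem_image] at hx1 hx2
    obtain ⟨k1, -, rfl⟩ := hx1
    obtain ⟨k2, -, h⟩ := hx2
    apply hne
    have h1 := congrArg (fun y => y.1.1) h
    have h2 := congrArg (fun y => y.1.2) h
    simp only at h1 h2
    exact Prod.ext_iff.2 ⟨(Fin.castSucc_injective n h1).symm, (Fin.castSucc_injective n h2).symm⟩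
  rw [Finset.card_biUnion hd1, Finset.card_biUnion hd2]
  have c1 : ∀ j : Fin n,
      ((Finset.Icc (1:ℤ) (M j : ℤ)).image fun k => (((Fin.castSucc j), Fin.last n), k)).card
        = M j := by
    intro j
    rw [Finset.card_image_of_injective _ (hinj _), Int.card_Icc]
    omega
  have c2 : ∀ p : Fin n × Fin n,
      ((E p).image fun k => (((Fin.castSucc p.1), (Fin.castSucc p.2)), k)).card
        = ellBeta n (Fin.castSucc p.1) (Fin.castSucc p.2) μ := by
    intro p
    rw [Finset.card_image_of_injective _ (hinj _), hEcard]
  rw [Finset.sum_congr rfl (fun j _ => c1 j), Finset.sum_congr rfl (fun p _ => c2 p)]
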